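/- Let v : ℤ → ℝ → ℝ be a family of differentiable functions satisfying for all n ∈ ℤ and t ∈ ℝ the equation v̇_n = v_n (v_{n+2} v_{n+1} − v_{n−1} v_{n−2}). Define u_n(t) = v_{n+1}(t) v_n(t). Then for all n ∈ ℤ and t ∈ ℝ, u̇_n = u_n (u_{n+2} + u_{n+1} − u_{n−1} − u_{n−2}), i.e., u solves the INB equation. -/

import Mathlib

/-- Equation `v̇ₙ = vₙ(v_{n+2} v_{n+1} − v_{n−1} v_{n−2})` is transformed into the
INB equation by the transformation `uₙ = v_{n+1} vₙ`. -/
theorem stmt_1 (v : ℤ → ℝ → ℝ)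
    (hv : ∀ (n : ℤ) (t : ℝ), HasDerivAt (v n)
      (v n t * (v (n + 2) t * v (n + 1) t - v (n - 1) t * v (n - 2) t)) t)
    (u : ℤ → ℝ → ℝ)
    (hu : ∀ (n : ℤ) (t : ℝ), u n t = v (n + 1) t * v n t) :
    ∀ (n : ℤ) (t : ℝ), HasDerivAt (u n)
      (u n t * (u (n + 2) t + u (n + 1) t - u (n - 1) t - u (n - 2) t)) t := by
  intro n t
  have hfun : u n = fun t => v (n + 1) t * v n t := funext fun t => hu n t
  rw [hfun]
  have h : HasDerivAt (fun t => v (n + 1) t * v n t) _ t := (hv (n + 1) t).mul (hv n t)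
  convert h using 1
  simp only [hu]
  have e1 : n + 2 + 1 = n + 3 := by ring
  have e2 : n + 1 + 1 = n + 2 := by ring
  have e3 : n - 1 + 1 = n := by ring
  have e4 : n - 2 + 1 = n - 1 := by ring
  have e5 : n + 1 + 2 = n + 3 := by ring
  have e6 : n + 1 - 1 = n := by ring
  have e7 : n + 1 - 2 = n - 1 := by ring
  simp only [e1, e2, e3, e4, e5, e6, e7]
  ring
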